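/- arXiv:1910.07444 — 2 statements merged into one kernel-verified Lean document; each statement's English description precedes it below -/
import Mathlib

section
/- Let $R = \mathbb{Z}[x_1,\dots,x_r]$, and for an indexing sequence $I = (i_1,\dots,i_k)$ with each $i_j < r$, define $A_I = R[\delta_1,\dots,\delta_k]/(\delta_j^2 + [\alpha_{i_j}]_j \delta_j : 1 \le j \le k)$, where for any weight $\alpha$ the elements $[\alpha]_j \in A_I$ are defined recursively by $[\alpha]_1 = \alpha$ and $[\alpha]_j = [\alpha]_{j-1} + \alpha(h_{i_{j-1}})\,\delta_{j-1}$. Then $A_I$ is a free $R$-module with basis the $2^k$ square-free monomials in $\delta_1,\dots,\delta_k$. -/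
noncomputable section

/-- `R = ℤ[x_1,…,x_r]` (variables indexed `0,…,r-1`). -/
abbrev RR (r : ℕ) : Type := MvPolynomial (Fin r) ℤ

/-- A weight, given by its coordinates in the basis `x_1,…,x_r`. -/
abbrev Weight (r : ℕ) : Type := Fin r → ℤ

/-- The element of `R` corresponding to a weight. -/
def Weight.toR {r : ℕ} (w : Weight r) : RR r :=
  ∑ m : Fin r, MvPolynomial.C (w m) * MvPolynomial.X m

/-- The coroot pairing `α(h_u)`, with `x_m(h_u) = δ_{m,u} - δ_{m,u+1}`. -/
def Weight.pair {r : ℕ} (w : Weight r) (u : ℕ) (hu : u + 1 < r) : ℤ :=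
  w ⟨u, Nat.lt_of_succ_lt hu⟩ - w ⟨u + 1, hu⟩

/-- The simple root `α_s = x_s - x_{s+1}` as a weight. -/
def simpleRootW (r s : ℕ) : Weight r :=
  fun m => (if (m : ℕ) = s then 1 else 0) - (if (m : ℕ) = s + 1 then 1 else 0)

/-- The polynomial ring `R[δ_1,…,δ_k]`. -/
abbrev BB (r k : ℕ) : Type := MvPolynomial (Fin k) (RR r)

/-- The class `[α]_j` (`0`-indexed: `brk i hi w j` is the paper's `[α]_{j+1}`), i.e.
the solution `[α]_j = α + ∑_{t<j} α(h_{i_t}) δ_t` of the recursion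
`[α]_1 = α`, `[α]_j = [α]_{j-1} + α(h_{i_{j-1}}) δ_{j-1}`. -/
def brk {r k : ℕ} (i : Fin k → ℕ) (hi : ∀ j, i j + 1 < r) (w : Weight r) (j : ℕ) :
    BB r k :=
  MvPolynomial.C w.toR +
    ∑ t ∈ Finset.univ.filter (fun t : Fin k => (t : ℕ) < j),
      (w.pair (i t) (hi t)) • MvPolynomial.X t

/-- The defining relation `δ_j² + [α_{i_j}]_j δ_j` at position `j`. -/
def relBS {r k : ℕ} (i : Fin k → ℕ) (hi : ∀ j, i j + 1 < r) (j : Fin k) : BB r k :=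
  MvPolynomial.X j ^ 2 + brk i hi (simpleRootW r (i j)) (j : ℕ) * MvPolynomial.X j

/-- The Bott–Samelson algebra `A_I = R[δ_1,…,δ_k]/(δ_j² + [α_{i_j}]_j δ_j)`. -/
abbrev AI {r k : ℕ} (i : Fin k → ℕ) (hi : ∀ j, i j + 1 < r) : Type :=
  BB r k ⧸ Ideal.span (Set.range (relBS i hi))

namespace BSaux

open MvPolynomial

variable {r k : ℕ}

lemma zsmul_RR (c : ℤ) (x : RR r) : c • x = MvPolynomial.C c * x := by
  rw [zsmul_eq_mul]
  congr 1

lemma toR_sub_zsmul (v u : Weight r) (c : ℤ) :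
    Weight.toR (fun m => v m - c * u m) = v.toR - c • u.toR := by
  simp only [Weight.toR, Finset.smul_sum, ← Finset.sum_sub_distrib]
  refine Finset.sum_congr rfl fun m _ => ?_
  rw [zsmul_RR, ← mul_assoc, ← sub_mul, ← MvPolynomial.C_mul, ← MvPolynomial.C_sub]

lemma eval_toR (w : Weight r) (a : Fin r) :
    MvPolynomial.eval (fun n => if n = a then (1:ℤ) else 0) w.toR = w a := by
  simp [Weight.toR, mul_ite, Finset.sum_ite_eq']

lemma toR_ne_zero {w : Weight r} (a : Fin r) (h : w a ≠ 0) : w.toR ≠ 0 := by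
  intro h0
  exact h (by rw [← eval_toR w a, h0, map_zero])

variable (i : Fin k → ℕ) (hi : ∀ j, i j + 1 < r) (ε : Finset (Fin k))

/-- The two points of the simple root at position `j`. -/
def ptA (j : Fin k) : Fin r := ⟨i j, Nat.lt_of_succ_lt (hi j)⟩
def ptB (j : Fin k) : Fin r := ⟨i j + 1, hi j⟩

lemma ptA_ne_ptB (j : Fin k) : ptA i hi j ≠ ptB i hi j := by
  simp [ptA, ptB, Fin.ext_iff]

/-- Permutation after the first `j` steps, for the fixed point `ε`. -/
def gperm : ℕ → Equiv.Perm (Fin r)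
  | 0 => 1
  | j + 1 =>
    if h : j < k then
      (if (⟨j, h⟩ : Fin k) ∈ ε then
        (gperm j).trans (Equiv.swap (ptA i hi ⟨j, h⟩) (ptB i hi ⟨j, h⟩))
      else gperm j)
    else gperm j

/-- The value of `δ_j` at the fixed point `ε`. -/
def dval (j : Fin k) : RR r :=
  if j ∈ ε then
    -(Weight.toR (fun m => simpleRootW r (i j) (gperm i hi ε (j : ℕ) m)))
  else 0

lemma aeval_brk (w : Weight r) : ∀ j : ℕ, j ≤ k →
    MvPolynomial.aeval (dval i hi ε) (brk i hi w j)
      = Weight.toR (fun m => w (gperm i hi ε j m)) := by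
  intro j
  induction j with
  | zero =>
    intro _
    have : Finset.univ.filter (fun t : Fin k => (t : ℕ) < 0) = ∅ := by simp
    simp [brk, this, gperm]
  | succ j ih =>
    intro hj
    have hjk : j < k := hj
    set jf : Fin k := ⟨j, hjk⟩ with hjf
    have hfil : Finset.univ.filter (fun t : Fin k => (t : ℕ) < j + 1)
        = insert jf (Finset.univ.filter (fun t : Fin k => (t : ℕ) < j)) := by
      ext t
      simp only [Finset.mem_filter, Finset.mem_insert, Finset.mem_univ, true_and, hjf,
        Fin.ext_iff]
      omega
    have hnot : jf ∉ Finset.univ.filter (fun t : Fin k => (t : ℕ) < j) := by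
      simp [hjf]
    have hbrk : brk i hi w (j + 1) = brk i hi w j + (w.pair (i jf) (hi jf)) • X jf := by
      rw [brk, brk, hfil, Finset.sum_insert hnot]
      abel
    rw [hbrk, map_add, map_zsmul, MvPolynomial.aeval_X, ih (le_of_lt hjk)]
    by_cases hmem : jf ∈ ε
    · have hd : dval i hi ε jf
          = -(Weight.toR (fun m => simpleRootW r (i jf) (gperm i hi ε j m))) := by
        simp [dval, hmem, hjf, (show (⟨j, hjk⟩ : Fin k) ∈ ε from hmem)]
      have hg : gperm i hi ε (j + 1)
          = (gperm i hi ε j).trans (Equiv.swap (ptA i hi jf) (ptB i hi jf)) := by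
        rw [gperm]
        simp [hjk, hjf, hmem, (show (⟨j, hjk⟩ : Fin k) ∈ ε from hmem)]
      rw [hd, hg, smul_neg, ← sub_eq_add_neg, ← toR_sub_zsmul]
      congr 1
      funext m
      set n := gperm i hi ε j m with hn
      have hAB : ptA i hi jf ≠ ptB i hi jf := ptA_ne_ptB i hi jf
      simp only [Equiv.trans_apply, ← hn]
      rcases eq_or_ne n (ptA i hi jf) with h1 | h1
      · rw [h1, Equiv.swap_apply_left]
        have e1 : ((ptA i hi jf : Fin r) : ℕ) = i jf := rfl
        simp [Weight.pair, simpleRootW, e1, ptA, ptB]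
      · rcases eq_or_ne n (ptB i hi jf) with h2 | h2
        · rw [h2, Equiv.swap_apply_right]
          simp [Weight.pair, simpleRootW, ptA, ptB]
        · rw [Equiv.swap_apply_of_ne_of_ne h1 h2]
          have e1 : ((n : ℕ) = i jf) = False := by
            simp only [eq_iff_iff, iff_false]
            intro hc
            exact h1 (by simp [ptA, Fin.ext_iff, hc])
          have e2 : ((n : ℕ) = i jf + 1) = False := by
            simp only [eq_iff_iff, iff_false]
            intro hc
            exact h2 (by simp [ptB, Fin.ext_iff, hc])
          simp [simpleRootW, e1, e2]
    · have hd : dval i hi ε jf = 0 := by simp [dval, hmem, hjf, (show (⟨j, hjk⟩ : Fin k) ∉ ε from hmem)]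
      have hg : gperm i hi ε (j + 1) = gperm i hi ε j := by
        rw [gperm]; simp [hjk, hjf, hmem, (show (⟨j, hjk⟩ : Fin k) ∉ ε from hmem)]
      rw [hd, hg, smul_zero, add_zero]

lemma aeval_relBS (j : Fin k) :
    MvPolynomial.aeval (dval i hi ε) (relBS i hi j) = 0 := by
  have hb := aeval_brk i hi ε (simpleRootW r (i j)) (j : ℕ) (le_of_lt j.isLt)
  rw [relBS, map_add, map_mul, map_pow, MvPolynomial.aeval_X, hb]
  by_cases hmem : j ∈ ε
  · have hd : dval i hi ε j
        = -(Weight.toR (fun m => simpleRootW r (i j) (gperm i hi ε (j : ℕ) m))) := by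
      simp [dval, hmem]
    rw [hd]; ring
  · have hd : dval i hi ε j = 0 := by simp [dval, hmem]
    rw [hd]; ring

end BSaux

namespace BSaux

open MvPolynomial

variable {r k : ℕ} (i : Fin k → ℕ) (hi : ∀ j, i j + 1 < r)

/-- Evaluation of `A_I` at the fixed point `ε`. -/
def phi (ε : Finset (Fin k)) : AI i hi →ₐ[RR r] RR r :=
  Ideal.Quotient.liftₐ _ (MvPolynomial.aeval (dval i hi ε)) (by
    intro a ha
    have hle : Ideal.span (Set.range (relBS i hi)) ≤
        RingHom.ker (MvPolynomial.aeval (dval i hi ε) : BB r k →ₐ[RR r] RR r).toRingHom := by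
      rw [Ideal.span_le]
      rintro _ ⟨j, rfl⟩
      exact aeval_relBS i hi ε j
    exact hle ha)

lemma phi_mk (ε : Finset (Fin k)) (p : BB r k) :
    phi i hi ε (Ideal.Quotient.mk _ p) = MvPolynomial.aeval (dval i hi ε) p := by
  simp [phi]
  rfl

end BSaux

set_option maxHeartbeats 1000000 in
set_option synthInstance.maxHeartbeats 400000 in
/-- `A_I` is a free `R`-module with basis the `2^k` square-free monomials
in the `δ_j` (indexed by subsets of `{1,…,k}`). -/
theorem bottSamelson_free_basis (r k : ℕ) (i : Fin k → ℕ) (hi : ∀ j, i j + 1 < r) :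
    ∃ b : Module.Basis (Finset (Fin k)) (RR r) (AI i hi),
      ∀ S : Finset (Fin k),
        b S = Ideal.Quotient.mk _ (∏ j ∈ S, MvPolynomial.X j) := by
  classical
  set mk : BB r k →+* AI i hi := Ideal.Quotient.mk (Ideal.span (Set.range (relBS i hi)))
    with hmkdef
  set bf : Finset (Fin k) → AI i hi := fun S => mk (∏ j ∈ S, MvPolynomial.X j) with hbf
  have halg : ∀ c : RR r, algebraMap (RR r) (AI i hi) c = mk (MvPolynomial.C c) :=
    fun c => rfl
  have hval : ∀ (ε S : Finset (Fin k)),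
      BSaux.phi i hi ε (bf S) = ∏ j ∈ S, BSaux.dval i hi ε j := by
    intro ε S
    simp only [hbf, hmkdef]
    rw [BSaux.phi_mk, map_prod (MvPolynomial.aeval (R := RR r) (BSaux.dval i hi ε))
      (fun j => MvPolynomial.X j) S]
    simp
  set P : Submodule (RR r) (AI i hi) := Submodule.span (RR r) (Set.range bf) with hP
  -- auxiliary: ℤ-scalars
  have hz : ∀ (c : ℤ) (x : AI i hi), x ∈ P → c • x ∈ P := fun c x hx => zsmul_mem hx c
  -- the quotient relation
  have hrel : ∀ j : Fin k, mk (MvPolynomial.X j ^ 2)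
      = -(mk (brk i hi (simpleRootW r (i j)) (j : ℕ)) * mk (MvPolynomial.X j)) := by
    intro j
    have h0 : mk (relBS i hi j) = 0 := by
      rw [hmkdef, Ideal.Quotient.eq_zero_iff_mem]
      exact Ideal.subset_span ⟨j, rfl⟩
    rw [relBS, map_add, map_mul] at h0
    exact eq_neg_of_add_eq_zero_left h0
  -- step 1: products with a single variable
  have step1 : ∀ (n : ℕ) (j : Fin k), (j : ℕ) < n →
      ∀ S : Finset (Fin k), mk (MvPolynomial.X j) * bf S ∈ P := by
    intro n
    induction n with
    | zero => intro j h; omega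
    | succ n ihn =>
      intro j hj S
      by_cases hjS : j ∈ S
      · have hS : ∏ t ∈ S, (MvPolynomial.X t : BB r k)
            = MvPolynomial.X j * ∏ t ∈ S.erase j, (MvPolynomial.X t : BB r k) :=
          (Finset.mul_prod_erase S _ hjS).symm
        have e1 : mk (MvPolynomial.X j) * bf S
            = mk (MvPolynomial.X j ^ 2) * mk (∏ t ∈ S.erase j, MvPolynomial.X t) := by
          simp only [hbf]
          rw [← map_mul, ← map_mul]
          congr 1
          rw [hS]; ring
        have e2 : mk (MvPolynomial.X j) * mk (∏ t ∈ S.erase j, MvPolynomial.X t) = bf S := by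
          rw [← map_mul, ← hS, hbf]
        have expand : mk (brk i hi (simpleRootW r (i j)) (j : ℕ)) * bf S
            = (simpleRootW r (i j)).toR • bf S
              + ∑ t ∈ Finset.univ.filter (fun t : Fin k => (t : ℕ) < (j : ℕ)),
                  ((simpleRootW r (i j)).pair (i t) (hi t))
                    • (mk (MvPolynomial.X t) * bf S) := by
          rw [brk, map_add, map_sum, add_mul, Finset.sum_mul]
          congr 1
          · exact ((Algebra.smul_def ((simpleRootW r (i j)).toR) (bf S)).trans
              (by rw [halg])).symm
          · refine Finset.sum_congr rfl fun t _ => ?_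
            calc mk (((simpleRootW r (i j)).pair (i t) (hi t)) • MvPolynomial.X t) * bf S
                = (((simpleRootW r (i j)).pair (i t) (hi t)) • mk (MvPolynomial.X t)) * bf S := by
                  rw [map_zsmul]
              _ = ((simpleRootW r (i j)).pair (i t) (hi t))
                    • (mk (MvPolynomial.X t) * bf S) :=
                  smul_mul_assoc ((simpleRootW r (i j)).pair (i t) (hi t))
                    (mk (MvPolynomial.X t)) (bf S)
        have k1 : -(mk (brk i hi (simpleRootW r (i j)) (j : ℕ)) * mk (MvPolynomial.X j))
              * mk (∏ t ∈ S.erase j, MvPolynomial.X t)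
            = -(mk (brk i hi (simpleRootW r (i j)) (j : ℕ)) * bf S) := by
          rw [← e2]; ring
        rw [e1, hrel j, k1, expand]
        refine neg_mem (add_mem ?_ (Submodule.sum_mem _ fun t ht => ?_))
        · exact Submodule.smul_mem _ _ (Submodule.subset_span ⟨S, rfl⟩)
        · have htj : (t : ℕ) < n := by
            have := (Finset.mem_filter.mp ht).2
            omega
          exact hz _ _ (ihn t htj S)
      · have heq : mk (MvPolynomial.X j) * bf S = bf (insert j S) := by
          simp only [hbf]
          rw [← map_mul]
          congr 1
          rw [Finset.prod_insert hjS]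
        rw [heq]
        exact Submodule.subset_span ⟨insert j S, rfl⟩
  -- closure under multiplication by variables
  have mulX : ∀ (j : Fin k) (x : AI i hi), x ∈ P → x * mk (MvPolynomial.X j) ∈ P := by
    intro j x hx
    induction hx using Submodule.span_induction with
    | mem x hxm =>
      obtain ⟨S, rfl⟩ := hxm
      have h1 := step1 ((j : ℕ) + 1) j (Nat.lt_succ_self _) S
      have hcomm : mk (MvPolynomial.X j) * bf S = bf S * mk (MvPolynomial.X j) :=
        mul_comm (mk (MvPolynomial.X j)) (bf S)
      rwa [hcomm] at h1
    | zero =>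
      have h0 : (0 : AI i hi) * mk (MvPolynomial.X j) = 0 := zero_mul (mk (MvPolynomial.X j))
      rw [h0]; exact zero_mem P
    | add x y _ _ hx hy =>
      have h0 : (x + y) * mk (MvPolynomial.X j) = x * mk (MvPolynomial.X j)
          + y * mk (MvPolynomial.X j) := add_mul x y (mk (MvPolynomial.X j))
      rw [h0]; exact add_mem hx hy
    | smul c x _ hx =>
      have h0 : (c • x) * mk (MvPolynomial.X j) = c • (x * mk (MvPolynomial.X j)) :=
        smul_mul_assoc c x (mk (MvPolynomial.X j))
      rw [h0]; exact Submodule.smul_mem _ _ hx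
  -- spanning
  have hPtop : ∀ p : BB r k, mk p ∈ P := by
    intro p
    induction p using MvPolynomial.induction_on with
    | C a =>
      have hb0 : bf ∅ = 1 := by simp only [hbf]; rw [Finset.prod_empty, map_one]
      have heq : mk (MvPolynomial.C a) = a • bf ∅ := by
        rw [hb0, ← halg a]
        exact Algebra.algebraMap_eq_smul_one a
      rw [heq]
      exact Submodule.smul_mem _ _ (Submodule.subset_span ⟨∅, rfl⟩)
    | add p q hp hq => rw [map_add]; exact add_mem hp hq
    | mul_X p j hp => rw [map_mul]; exact mulX j _ hp
  have hsp : Submodule.span (RR r) (Set.range bf) = ⊤ := by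
    rw [eq_top_iff]
    rintro x -
    obtain ⟨p, rfl⟩ := Ideal.Quotient.mk_surjective (I := Ideal.span (Set.range (relBS i hi))) x
    exact hPtop p
  -- linear independence
  have li : LinearIndependent (RR r) bf := by
    rw [Fintype.linearIndependent_iff]
    intro g hg S
    induction S using Finset.strongInduction with
    | _ S ih =>
      have h2 : ∑ T : Finset (Fin k), g T * (∏ j ∈ T, BSaux.dval i hi S j) = 0 := by
        have h3 := congrArg (BSaux.phi i hi S) hg
        rw [map_zero, map_sum] at h3
        rw [← h3]
        refine Finset.sum_congr rfl fun T _ => ?_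
        rw [map_smul, hval, smul_eq_mul]
      rw [Finset.sum_eq_single S (fun T _ hTS => ?_) (fun h => absurd (Finset.mem_univ S) h)]
        at h2
      · have hne : (∏ j ∈ S, BSaux.dval i hi S j) ≠ 0 := by
          rw [Finset.prod_ne_zero_iff]
          intro j hj
          rw [BSaux.dval, if_pos hj]
          refine neg_ne_zero.mpr (BSaux.toR_ne_zero
            ((BSaux.gperm i hi S (j : ℕ)).symm (BSaux.ptA i hi j)) ?_)
          rw [Equiv.apply_symm_apply]
          simp [simpleRootW, BSaux.ptA]
        rcases mul_eq_zero.mp h2 with h | h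
        · exact h
        · exact absurd h hne
      · by_cases hTsub : T ⊆ S
        · rw [ih T (HasSubset.Subset.ssubset_of_ne hTsub hTS), zero_mul]
        · obtain ⟨j, hjT, hjS⟩ := Finset.not_subset.mp hTsub
          rw [Finset.prod_eq_zero hjT (by simp [BSaux.dval, hjS]), mul_zero]
  exact ⟨Module.Basis.mk li hsp.ge, fun S => Module.Basis.mk_apply li hsp.ge S⟩
end
end

section
/- With $\wp(x) = x^n$ (the specialization $b_n = 1$, $b_i = 0$ for $i \ne n$), the divided difference $\wp(x,y) = (x^n - y^n)/(x-y)$ equals the symmetric sum $S(x,y) = x^{n-1} + x^{n-2}y + \dots + y^{n-1}$, and consequently the ring $\mathbb{Z}[[x,y]]/(x^n, y^n, S(x,y))$ is a free $\mathbb{Z}$-module of rank $n(n-1)$. -/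
noncomputable section
open MvPolynomial

def symmSum (n : ℕ) : MvPolynomial (Fin 2) ℤ :=
  ∑ a ∈ Finset.range n, X 0 ^ a * X 1 ^ (n - 1 - a)

lemma symmSum_succ (n : ℕ) : symmSum (n + 1) = X 0 ^ n + X 1 * symmSum n := by
  unfold symmSum
  rw [Finset.sum_range_succ, Finset.mul_sum]
  simp only [Nat.add_sub_cancel, Nat.sub_self, pow_zero, mul_one]
  rw [add_comm]
  congr 1
  apply Finset.sum_congr rfl
  intro a ha
  rw [Finset.mem_range] at ha
  have h : n - a = (n - 1 - a) + 1 := by omega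
  rw [h, pow_succ]; ring

lemma telescope (n : ℕ) (hn : 1 ≤ n) :
    (X 0 - X 1) * symmSum n = X 0 ^ n - (X 1 : MvPolynomial (Fin 2) ℤ) ^ n := by
  induction n with
  | zero => omega
  | succ m ih =>
    rcases Nat.eq_or_lt_of_le hn with h1 | h1
    · simp [symmSum, ← h1]
    · have hm : 1 ≤ m := by omega
      rw [symmSum_succ, mul_add, mul_comm (X 0 - X 1) (X 1 * symmSum m),
        mul_assoc, mul_comm (symmSum m), ih hm]
      ring


-- the equivalence ℤ[x,y] ≅ (ℤ[Y])[X], X 0 ↦ X, X 1 ↦ C Y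
def e0 : MvPolynomial (Fin 1) ℤ ≃ₐ[ℤ] Polynomial ℤ :=
  (MvPolynomial.finSuccEquiv ℤ 0).trans
    (Polynomial.mapAlgEquiv (MvPolynomial.isEmptyAlgEquiv ℤ (Fin 0)))

def E1 : MvPolynomial (Fin 2) ℤ ≃ₐ[ℤ] Polynomial (Polynomial ℤ) :=
  (MvPolynomial.finSuccEquiv ℤ 1).trans (Polynomial.mapAlgEquiv e0)

lemma E1_X0 : E1 (X 0) = Polynomial.X := by
  simp [E1, MvPolynomial.finSuccEquiv_X_zero, Polynomial.mapAlgEquiv]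

lemma E1_X1 : E1 (X 1) = Polynomial.C Polynomial.X := by
  have h : (X 1 : MvPolynomial (Fin 2) ℤ) = X (Fin.succ 0) := rfl
  rw [E1, AlgEquiv.trans_apply, h, MvPolynomial.finSuccEquiv_X_succ]
  simp [Polynomial.mapAlgEquiv, e0, MvPolynomial.finSuccEquiv_X_zero]

-- base ring R = ℤ[y]/(y^n)
def Rn (n : ℕ) := AdjoinRoot ((Polynomial.X : Polynomial ℤ) ^ n)
instance (n : ℕ) : CommRing (Rn n) := by unfold Rn; infer_instance

def fn (n : ℕ) : Polynomial (AdjoinRoot ((Polynomial.X : Polynomial ℤ) ^ n)) :=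
  ∑ a ∈ Finset.range n,
    Polynomial.X ^ a * Polynomial.C ((AdjoinRoot.root _) ^ (n - 1 - a))

lemma fn_eq (n : ℕ) : fn (n + 1) =
    Polynomial.X ^ n + ∑ a ∈ Finset.range n,
      Polynomial.X ^ a * Polynomial.C ((AdjoinRoot.root _) ^ (n + 1 - 1 - a)) := by
  rw [fn, Finset.sum_range_succ]
  simp only [Nat.add_sub_cancel, Nat.sub_self, pow_zero, map_one, mul_one]
  ring

lemma deg_lt (n : ℕ) : (∑ a ∈ Finset.range n, Polynomial.X ^ a *
    Polynomial.C ((AdjoinRoot.root ((Polynomial.X : Polynomial ℤ) ^ (n+1))) ^ (n + 1 - 1 - a))).degree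
    < (n : WithBot ℕ) := by
  apply lt_of_le_of_lt (Polynomial.degree_sum_le _ _)
  rw [Finset.sup_lt_iff (by exact WithBot.bot_lt_coe n)]
  intro a ha
  rw [Finset.mem_range] at ha
  refine lt_of_le_of_lt (Polynomial.degree_mul_le _ _) ?_
  refine lt_of_le_of_lt (add_le_add (Polynomial.degree_X_pow_le a) Polynomial.degree_C_le) ?_
  rw [add_zero]
  exact_mod_cast WithBot.coe_lt_coe.mpr ha

lemma fn_monic (n : ℕ) (hn : 1 ≤ n) : (fn n).Monic := by
  obtain ⟨m, rfl⟩ : ∃ m, n = m + 1 := ⟨n - 1, by omega⟩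
  rw [fn_eq]
  exact Polynomial.monic_X_pow_add (deg_lt m)

lemma fn_natDegree (n : ℕ) (hn : 1 ≤ n) : (fn n).natDegree = n - 1 := by
  obtain ⟨m, rfl⟩ : ∃ m, n = m + 1 := ⟨n - 1, by omega⟩
  rw [fn_eq]
  rw [Nat.add_sub_cancel]
  have hnt : Nontrivial (AdjoinRoot ((Polynomial.X : Polynomial ℤ) ^ (m+1))) :=
    AdjoinRoot.nontrivial _ (by rw [Polynomial.degree_X_pow]; exact_mod_cast Nat.succ_ne_zero m)
  have h := Polynomial.degree_add_eq_left_of_degree_lt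
    (p := (Polynomial.X : Polynomial (AdjoinRoot ((Polynomial.X : Polynomial ℤ) ^ (m+1)))) ^ m)
    (q := ∑ a ∈ Finset.range m, Polynomial.X ^ a *
      Polynomial.C ((AdjoinRoot.root ((Polynomial.X : Polynomial ℤ) ^ (m+1))) ^ (m + 1 - 1 - a)))
    (by rw [Polynomial.degree_X_pow]; exact deg_lt m)
  have h2 := Polynomial.natDegree_eq_of_degree_eq h
  simp only [Nat.add_sub_cancel] at h2 ⊢
  rw [h2, Polynomial.natDegree_X_pow]

section
variable (n : ℕ)

def gP : Polynomial (Polynomial ℤ) :=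
  ∑ a ∈ Finset.range n, Polynomial.X ^ a * Polynomial.C (Polynomial.X ^ (n - 1 - a))

def Iy : Ideal (Polynomial ℤ) := Ideal.span {Polynomial.X ^ n}

lemma map_gP : Polynomial.map (Ideal.Quotient.mk (Iy n)) (gP n) = fn n := by
  have hmk : Ideal.Quotient.mk (Iy n) = AdjoinRoot.mk ((Polynomial.X : Polynomial ℤ) ^ n) := rfl
  rw [gP, fn, Polynomial.map_sum]
  apply Finset.sum_congr rfl
  intro a _
  rw [Polynomial.map_mul, Polynomial.map_pow, Polynomial.map_X, Polynomial.map_C, hmk,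
    map_pow]
  have h1 := map_pow (AdjoinRoot.mk ((Polynomial.X : Polynomial ℤ) ^ n)) Polynomial.X (n - 1 - a)
  have h2 := map_pow (Polynomial.C : AdjoinRoot ((Polynomial.X : Polynomial ℤ) ^ n) →+*
    Polynomial (AdjoinRoot ((Polynomial.X : Polynomial ℤ) ^ n))) (AdjoinRoot.root _) (n - 1 - a)
  rw [AdjoinRoot.mk_X] at h1
  rw [← h2, ← h1]
  rfl

-- E1 maps symmSum to gP
lemma E1_symmSum : E1 (symmSum n) = gP n := by
  rw [symmSum, gP, map_sum]
  apply Finset.sum_congr rfl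
  intro a _
  rw [map_mul, map_pow, map_pow, E1_X0, E1_X1, ← map_pow]

def Ifull : Ideal (MvPolynomial (Fin 2) ℤ) :=
  Ideal.span {X 0 ^ n, X 1 ^ n, symmSum n}

lemma Ifull_eq (hn : 1 ≤ n) : Ifull n = Ideal.span {X 1 ^ n, symmSum n} := by
  apply le_antisymm
  · rw [Ifull, Ideal.span_le]
    intro p hp
    simp only [Set.mem_insert_iff, Set.mem_singleton_iff] at hp
    rcases hp with rfl | rfl | rfl
    · have : (X 0 : MvPolynomial (Fin 2) ℤ) ^ n
          = X 1 ^ n + (X 0 - X 1) * symmSum n := by rw [telescope n hn]; ring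
      rw [this]
      exact Ideal.add_mem _ (Ideal.subset_span (by simp))
        (Ideal.mul_mem_left _ _ (Ideal.subset_span (by simp)))
    · exact Ideal.subset_span (by simp)
    · exact Ideal.subset_span (by simp)
  · apply Ideal.span_mono
    intro p hp
    simp only [Set.mem_insert_iff, Set.mem_singleton_iff] at hp ⊢
    tauto

lemma map_Ifull (hn : 1 ≤ n) :
    Ideal.map (E1 : MvPolynomial (Fin 2) ℤ →+* Polynomial (Polynomial ℤ)) (Ifull n)
      = Ideal.map Polynomial.C (Iy n) ⊔ Ideal.span {gP n} := by
  rw [Ifull_eq n hn, Ideal.map_span, Iy, Ideal.map_span]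
  rw [Set.image_insert_eq, Set.image_singleton, Set.image_singleton]
  have h1 : (E1 : MvPolynomial (Fin 2) ℤ →+* Polynomial (Polynomial ℤ)) (X 1)
      = Polynomial.C Polynomial.X := E1_X1
  have h2 : (E1 : MvPolynomial (Fin 2) ℤ →+* Polynomial (Polynomial ℤ)) (symmSum n)
      = gP n := E1_symmSum n
  rw [map_pow, h1, h2, Ideal.span_insert, ← map_pow]

def ep : (Polynomial (Polynomial ℤ) ⧸ Ideal.map Polynomial.C (Iy n)) ≃+*
    Polynomial (AdjoinRoot ((Polynomial.X : Polynomial ℤ) ^ n)) :=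
  (Ideal.polynomialQuotientEquivQuotientPolynomial (Iy n)).symm

lemma map_ep :
    Ideal.map ((ep n : _ →+* _))
      (Ideal.map (Ideal.Quotient.mk (Ideal.map Polynomial.C (Iy n))) (Ideal.span {gP n}))
      = Ideal.span {fn n} := by
  rw [Ideal.map_span, Set.image_singleton, Ideal.map_span, Set.image_singleton]
  congr 1
  have h := Ideal.polynomialQuotientEquivQuotientPolynomial_symm_mk (Iy n) (gP n)
  rw [map_gP] at h
  exact congrArg (fun z => ({z} : Set _)) h

def Efinal (hn : 1 ≤ n) : (MvPolynomial (Fin 2) ℤ ⧸ Ifull n) ≃+* AdjoinRoot (fn n) :=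
  (Ideal.quotientEquiv (Ifull n) (Ideal.map Polynomial.C (Iy n) ⊔ Ideal.span {gP n})
      E1.toRingEquiv (by rw [← map_Ifull n hn]; rfl)).trans <|
  ((DoubleQuot.quotQuotEquivQuotSup (Ideal.map Polynomial.C (Iy n))
      (Ideal.span {gP n})).symm).trans <|
  Ideal.quotientEquiv _ (Ideal.span {fn n}) (ep n) (map_ep n).symm

def pbR : PowerBasis ℤ (AdjoinRoot ((Polynomial.X : Polynomial ℤ) ^ n)) :=
  AdjoinRoot.powerBasis' (Polynomial.monic_X_pow n)

def pbF (hn : 1 ≤ n) : PowerBasis (AdjoinRoot ((Polynomial.X : Polynomial ℤ) ^ n))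
    (AdjoinRoot (fn n)) :=
  AdjoinRoot.powerBasis' (fn_monic n hn)

def bigBasis (hn : 1 ≤ n) :
    Module.Basis (Fin (pbR n).dim × Fin ((pbF n hn).dim)) ℤ (AdjoinRoot (fn n)) :=
  (pbR n).basis.smulTower (pbF n hn).basis

lemma free_T (hn : 1 ≤ n) : Module.Free ℤ (AdjoinRoot (fn n)) :=
  Module.Free.of_basis (bigBasis n hn)

lemma finrank_T (hn : 1 ≤ n) :
    Module.finrank ℤ (AdjoinRoot (fn n)) = n * (n - 1) := by
  rw [Module.finrank_eq_card_basis (bigBasis n hn)]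
  simp only [Fintype.card_prod, Fintype.card_fin]
  congr 1
  · show (Polynomial.X ^ n : Polynomial ℤ).natDegree = n
    simp
  · show (fn n).natDegree = n - 1
    exact fn_natDegree n hn

end

/-- with `℘(x) = x^n`, the divided difference `(x^n - y^n)/(x-y)` equals
`S(x,y)`, and `ℤ[x,y]/(x^n, y^n, S(x,y))` is a free `ℤ`-module of rank `n(n-1)`. -/
theorem hopf_link_E2 (n : ℕ) (hn : 1 ≤ n) :
    (X 0 - X 1) * symmSum n = X 0 ^ n - (X 1 : MvPolynomial (Fin 2) ℤ) ^ n ∧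
    Module.Free ℤ
      (MvPolynomial (Fin 2) ℤ ⧸
        Ideal.span {X 0 ^ n, X 1 ^ n, symmSum n}) ∧
    Module.finrank ℤ
      (MvPolynomial (Fin 2) ℤ ⧸
        Ideal.span {X 0 ^ n, X 1 ^ n, symmSum n}) = n * (n - 1) := by
  have hI : Ideal.span {X 0 ^ n, X 1 ^ n, symmSum n} = Ifull n := rfl
  rw [hI]
  refine ⟨telescope n hn, ?_, ?_⟩
  · have e : (MvPolynomial (Fin 2) ℤ ⧸ Ifull n) ≃ₗ[ℤ] AdjoinRoot (fn n) := (Efinal n hn).toAddEquiv.toIntLinearEquiv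
    have := free_T n hn
    exact Module.Free.of_equiv e.symm
  · have e : (MvPolynomial (Fin 2) ℤ ⧸ Ifull n) ≃ₗ[ℤ] AdjoinRoot (fn n) := (Efinal n hn).toAddEquiv.toIntLinearEquiv
    rw [e.finrank_eq, finrank_T n hn]
end
end
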